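/- arXiv:1604.01470 — 2 statements merged into one kernel-verified Lean document; each statement's English description precedes it below -/
import Mathlib

section
/- For every x ∈ (0,1] there exists a strictly increasing sequence of positive integers (n_i) such that lim_{i→∞} (−log_β |I_{n_i}(x)|)/n_i = 1 + τ(x); moreover any sequence (n_i) with lim_{i→∞} t_{n_i − k_{n_i}*(x)}/n_i = τ(x) has this property. -/
open MeasureTheory Filter Set

noncomputable section

/-- The β-transformation on `(0,1]`: `T_β x = βx − ⌈βx⌉ + 1`. -/
def Tbeta (β x : ℝ) : ℝ := β * x - ⌈β * x⌉ + 1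

/-- The digits of the β-expansion, 0-indexed: `eps β x n` is the `(n+1)`-st digit
`ε_{n+1}(x,β) = ⌈β T_β^n x⌉ − 1`. -/
def eps (β x : ℝ) (n : ℕ) : ℤ := ⌈β * (Tbeta β)^[n] x⌉ - 1

/-- The basic interval of order `n` containing `x`:
all `y ∈ (0,1]` whose first `n` digits agree with those of `x`. -/
def In (β x : ℝ) (n : ℕ) : Set ℝ := {y ∈ Ioc (0:ℝ) 1 | ∀ j < n, eps β y j = eps β x j}

/-- The length of a set (Lebesgue measure). -/
def len (s : Set ℝ) : ℝ := (volume s).toReal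

/-- `tseq β n = t_n`: the maximal length of the block of zero digits of the
β-expansion of `1` immediately following position `n` (digits `ε*_{n+1},…,ε*_{n+k}`). -/
def tseq (β : ℝ) (n : ℕ) : ℕ := sSup {k : ℕ | ∀ j < k, eps β 1 (n + j) = 0}

/-- `Gam β n = Γ_n = max_{1 ≤ k ≤ n} t_k`. -/
def Gam (β : ℝ) (n : ℕ) : ℕ := Finset.sup (Finset.Icc 1 n) (tseq β)

/-- `lam β = λ(β) = limsup_n Γ_n / n`. -/
def lam (β : ℝ) : ℝ := Filter.limsup (fun n : ℕ => (Gam β n : ℝ) / n) atTop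

/-- `kstar β x n = k_n^*(x)`: the smallest `k ≥ 0` such that
`(ε_{k+1}(x),…,ε_n(x)) = (ε*_1,…,ε*_{n−k})`. -/
def kstar (β x : ℝ) (n : ℕ) : ℕ := sInf {k : ℕ | ∀ i < n - k, eps β x (k + i) = eps β 1 i}

/-- `tau β x = τ(x) = limsup_n t_{n − k_n^*(x)} / n`. -/
def tau (β x : ℝ) : ℝ :=
  Filter.limsup (fun n : ℕ => (tseq β (n - kstar β x n) : ℝ) / n) atTop

/-- The upper density `\overline{D}(x) = limsup_n (−log_β |I_n(x)|)/n`. -/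
def upperD (β x : ℝ) : ℝ :=
  Filter.limsup (fun n : ℕ => -Real.logb β (len (In β x n)) / n) atTop

/-- The lower density `\underline{D}(x) = liminf_n (−log_β |I_n(x)|)/n`. -/
def lowerD (β x : ℝ) : ℝ :=
  Filter.liminf (fun n : ℕ => -Real.logb β (len (In β x n)) / n) atTop

/-- The basic interval (cylinder) associated to a finite word `w` of digits:
all `x ∈ (0,1]` whose β-expansion starts with `w`. -/
def cyl (β : ℝ) (w : List ℤ) : Set ℝ :=
  {x ∈ Ioc (0:ℝ) 1 | ∀ j < w.length, eps β x j = w.getD j 0}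

/-- A finite word is admissible if it occurs as the initial digits of some `x ∈ (0,1]`. -/
def Admissible (β : ℝ) (w : List ℤ) : Prop := (cyl β w).Nonempty

/-- A basic interval is full if its length is `β^{−n}` where `n` is the order. -/
def IsFull (β : ℝ) (w : List ℤ) : Prop := len (cyl β w) = β ^ (-(w.length : ℤ))

/-- The word `(ε*_1,…,ε*_n)` of the first `n` digits of the β-expansion of `1`. -/
def estarWord (β : ℝ) (n : ℕ) : List ℤ := (List.range n).map (eps β 1)

/-- The interior of a set relative to the subspace `[0,1]`
(for `S ⊆ [0,1]` this is exactly the interior of `S` in the topology of `[0,1]`). -/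
def intIn01 (S : Set ℝ) : Set ℝ := Icc 0 1 \ closure (Icc 0 1 \ S)

-- from a.lean
lemma Tbeta_mem_Ioc (β y : ℝ) : Tbeta β y ∈ Ioc (0:ℝ) 1 := by
  constructor
  · have := Int.ceil_lt_add_one (β * y); simp only [Tbeta]; linarith
  · have := Int.le_ceil (β * y); simp only [Tbeta]; linarith
lemma iter_mem {β y : ℝ} (hy : y ∈ Ioc (0:ℝ) 1) (j : ℕ) : (Tbeta β)^[j] y ∈ Ioc (0:ℝ) 1 := by
  cases j with
  | zero => exact hy
  | succ n => rw [Function.iterate_succ_apply']; exact Tbeta_mem_Ioc _ _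
lemma eps_nonneg {β y : ℝ} (hβ : 0 < β) (hy : y ∈ Ioc (0:ℝ) 1) (i : ℕ) : 0 ≤ eps β y i := by
  have h := (iter_mem (β:=β) hy i).1
  have : (0:ℤ) < ⌈β * (Tbeta β)^[i] y⌉ := Int.ceil_pos.mpr (mul_pos hβ h)
  simp only [eps]; omega
lemma iterate_succ_eq (β y : ℝ) (i : ℕ) :
    (Tbeta β)^[i+1] y = β * (Tbeta β)^[i] y - eps β y i := by
  rw [Function.iterate_succ_apply']
  simp only [Tbeta, eps]
  push_cast
  ring
lemma eps_shift (β y : ℝ) (j i : ℕ) : eps β ((Tbeta β)^[j] y) i = eps β y (j + i) := by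
  simp only [eps, ← Function.iterate_add_apply]
  rw [Nat.add_comm i j]
lemma iter_sub (β : ℝ) {y z : ℝ} (p : ℕ) (h : ∀ i < p, eps β y i = eps β z i) :
    (Tbeta β)^[p] y - (Tbeta β)^[p] z = β^p * (y - z) := by
  induction p with
  | zero => simp
  | succ p ih =>
    have hd : eps β y p = eps β z p := h p (by omega)
    have ih' := ih (fun i hi => h i (by omega))
    rw [iterate_succ_eq, iterate_succ_eq, hd]
    have : β*((Tbeta β)^[p] y - (Tbeta β)^[p] z) = β*(β^p*(y-z)) := by rw [ih']
    rw [pow_succ]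
    linarith [this]
lemma iter_le {β y : ℝ} (hβ : 0 < β) (hy : y ∈ Ioc (0:ℝ) 1) (j d : ℕ) :
    (Tbeta β)^[j + d] y ≤ β^d * (Tbeta β)^[j] y := by
  induction d with
  | zero => simp
  | succ d ih =>
    have h1 : (Tbeta β)^[j + (d+1)] y = β * (Tbeta β)^[j+d] y - eps β y (j+d) := by
      rw [show j + (d+1) = (j+d) + 1 by ring, iterate_succ_eq]
    have h2 : (0:ℝ) ≤ eps β y (j+d) := by exact_mod_cast eps_nonneg hβ hy (j+d)
    have h3 : β * (Tbeta β)^[j+d] y ≤ β * (β^d * (Tbeta β)^[j] y) :=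
      mul_le_mul_of_nonneg_left ih hβ.le
    rw [h1, pow_succ]
    nlinarith

-- from b.lean
lemma mem_In_iff {β x : ℝ} (hx : x ∈ Ioc (0:ℝ) 1) (n : ℕ) (y : ℝ) :
    y ∈ In β x n ↔ ∀ j ≤ n, (Tbeta β)^[j] x + β^j * (y - x) ∈ Ioc (0:ℝ) 1 := by
  constructor
  · rintro ⟨hy, hd⟩ j hj
    have h : (Tbeta β)^[j] y - (Tbeta β)^[j] x = β^j * (y - x) :=
      iter_sub β j (fun i hi => hd i (lt_of_lt_of_le hi hj))
    have : (Tbeta β)^[j] x + β^j * (y - x) = (Tbeta β)^[j] y := by linarith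
    rw [this]; exact iter_mem hy j
  · intro h
    have hy : y ∈ Ioc (0:ℝ) 1 := by
      have := h 0 (Nat.zero_le n); simpa using this
    refine ⟨hy, ?_⟩
    intro i hi
    induction i using Nat.strong_induction_on with
    | _ i ih =>
      have haff : (Tbeta β)^[i] y - (Tbeta β)^[i] x = β^i * (y - x) :=
        iter_sub β i (fun i' hi' => ih i' hi' (lt_trans hi' hi))
      have h2 := h (i+1) (by omega)
      have h3 : (Tbeta β)^[i+1] x + β^(i+1) * (y - x)
          = β * (Tbeta β)^[i] y - eps β x i := by
        have haff' : β * ((Tbeta β)^[i] y - (Tbeta β)^[i] x) = β * (β^i * (y-x)) := by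
          rw [haff]
        rw [iterate_succ_eq, pow_succ]
        linarith [haff']
      rw [h3] at h2
      have : ⌈β * (Tbeta β)^[i] y⌉ = eps β x i + 1 := by
        rw [Int.ceil_eq_iff]
        constructor
        · push_cast; linarith [h2.1]
        · push_cast; linarith [h2.2]
      simp only [eps, this]
      ring

-- from c.lean
lemma one_mem_Ioc : (1:ℝ) ∈ Ioc (0:ℝ) 1 := ⟨one_pos, le_refl 1⟩
lemma iter_zeros {β : ℝ} (m k : ℕ) (h : ∀ j < k, eps β 1 (m + j) = 0) :
    ∀ j ≤ k, (Tbeta β)^[m + j] 1 = β^j * (Tbeta β)^[m] 1 := by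
  intro j hj
  induction j with
  | zero => simp
  | succ j ih =>
    have h1 : (Tbeta β)^[m + (j+1)] 1 = β * (Tbeta β)^[m+j] 1 - eps β 1 (m+j) := by
      rw [show m + (j+1) = (m+j) + 1 by ring, iterate_succ_eq]
    rw [h1, h j (by omega), ih (by omega), pow_succ]
    push_cast; ring
lemma tseq_bddAbove {β : ℝ} (hβ : 1 < β) (m : ℕ) :
    BddAbove {k : ℕ | ∀ j < k, eps β 1 (m + j) = 0} := by
  have hT := iter_mem (β := β) one_mem_Ioc m
  obtain ⟨N, hN⟩ : ∃ N : ℕ, 1 / (Tbeta β)^[m] 1 < β ^ N := pow_unbounded_of_one_lt _ hβ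
  refine ⟨N, fun k hk => ?_⟩
  by_contra hlt
  push_neg at hlt
  have h2 := iter_zeros m k hk k le_rfl
  have h3 := (iter_mem (β := β) one_mem_Ioc (m + k)).2
  rw [h2] at h3
  have hβk : β ^ N ≤ β ^ k := pow_le_pow_right₀ hβ.le (by omega)
  have h4 : 1 / (Tbeta β)^[m] 1 < β ^ k := lt_of_lt_of_le hN hβk
  rw [div_lt_iff₀ hT.1] at h4
  nlinarith [hT.1]
lemma tseq_spec {β : ℝ} (hβ : 1 < β) (m : ℕ) :
    (∀ j < tseq β m, eps β 1 (m + j) = 0) ∧ eps β 1 (m + tseq β m) ≠ 0 := by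
  have hbdd := tseq_bddAbove hβ m
  have hne : {k : ℕ | ∀ j < k, eps β 1 (m + j) = 0}.Nonempty := ⟨0, by intro j hj; omega⟩
  have hmem : tseq β m ∈ {k : ℕ | ∀ j < k, eps β 1 (m + j) = 0} := Nat.sSup_mem hne hbdd
  refine ⟨hmem, ?_⟩
  intro hzero
  have : tseq β m + 1 ∈ {k : ℕ | ∀ j < k, eps β 1 (m + j) = 0} := by
    intro j hj
    rcases Nat.lt_or_ge j (tseq β m) with h | h
    · exact hmem j h
    · have : j = tseq β m := by omega
      rw [this]; exact hzero
  have := le_csSup hbdd this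
  simpa [tseq] using this
lemma eps_one_pos {β : ℝ} (hβ : 1 < β) {i : ℕ} (h : eps β 1 i ≠ 0) :
    1 < β * (Tbeta β)^[i] 1 := by
  have h0 := eps_nonneg (by linarith : (0:ℝ) < β) one_mem_Ioc (i := i)
  have h1 : 1 ≤ eps β 1 i := by omega
  have h2 : (2:ℤ) ≤ ⌈β * (Tbeta β)^[i] 1⌉ := by simp only [eps] at h1; omega
  by_contra hle
  push_neg at hle
  have : ⌈β * (Tbeta β)^[i] 1⌉ ≤ 1 := Int.ceil_le.mpr (by exact_mod_cast hle)
  omega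
lemma tseq_bounds {β : ℝ} (hβ : 1 < β) (m : ℕ) :
    β ^ tseq β m * (Tbeta β)^[m] 1 ≤ 1 ∧ 1 < β ^ (tseq β m + 1) * (Tbeta β)^[m] 1 := by
  obtain ⟨hz, hnz⟩ := tseq_spec hβ m
  have h2 := iter_zeros m (tseq β m) hz (tseq β m) le_rfl
  constructor
  · have := (iter_mem (β := β) one_mem_Ioc (m + tseq β m)).2
    rwa [h2] at this
  · have := eps_one_pos hβ hnz
    rw [h2] at this
    rw [pow_succ]
    nlinarith

-- from d.lean
lemma kstar_spec (β x : ℝ) (n : ℕ) :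
    kstar β x n ≤ n ∧ ∀ i < n - kstar β x n, eps β x (kstar β x n + i) = eps β 1 i := by
  have hn : n ∈ {k : ℕ | ∀ i < n - k, eps β x (k + i) = eps β 1 i} := by
    intro i hi; omega
  exact ⟨Nat.sInf_le hn, Nat.sInf_mem (⟨n, hn⟩ : Set.Nonempty _)⟩

/-- Monotonicity along self-matching: if `j ≥ kstar` matches then `T^[n-j] 1 ≥ T^[m] 1`. -/
lemma Tpow_one_ge {β x : ℝ} (hβ : 1 < β) (hx : x ∈ Ioc (0:ℝ) 1) {n j : ℕ} (hj : j ≤ n)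
    (hmatch : ∀ i < n - j, eps β x (j + i) = eps β 1 i) :
    (Tbeta β)^[n - kstar β x n] 1 ≤ (Tbeta β)^[n - j] 1 := by
  set k := kstar β x n with hk
  obtain ⟨hkn, hkm⟩ := kstar_spec β x n
  have hjK : j ∈ {k' : ℕ | ∀ i < n - k', eps β x (k' + i) = eps β 1 i} := hmatch
  have hkj : k ≤ j := Nat.sInf_le hjK
  set m := n - k with hm
  set p := n - j with hp
  set q := j - k with hq
  have hqp : q + p = m := by omega
  -- digits of T^[q] 1 match digits of 1 for p digits
  have hdig : ∀ i < p, eps β ((Tbeta β)^[q] 1) i = eps β 1 i := by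
    intro i hi
    rw [eps_shift]
    have h1 : eps β x (k + (q + i)) = eps β 1 (q + i) := hkm (q + i) (by omega)
    have h2 : eps β x (j + i) = eps β 1 i := hmatch i hi
    rw [show k + (q + i) = j + i by omega] at h1
    rw [← h1, h2]
  have haff := iter_sub β p hdig
  have hle : (Tbeta β)^[q] 1 ≤ 1 := (iter_mem (β := β) one_mem_Ioc q).2
  have hpow : (0:ℝ) < β ^ p := pow_pos (by linarith) p
  have hiter : (Tbeta β)^[p] ((Tbeta β)^[q] 1) = (Tbeta β)^[m] 1 := by
    rw [← Function.iterate_add_apply, show p + q = m by omega]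
  rw [hiter] at haff
  nlinarith
 
/-- Core induction: for all `p ≤ n`,
`β^p (1 - T^[n-p] x) + T^[n] x ≥ (β^(t+1))⁻¹` where `t = tseq β (n - kstar β x n)`. -/
lemma core_ineq {β x : ℝ} (hβ : 1 < β) (hx : x ∈ Ioc (0:ℝ) 1) (n : ℕ) :
    ∀ p ≤ n, (β ^ (tseq β (n - kstar β x n) + 1))⁻¹
      ≤ β ^ p * (1 - (Tbeta β)^[n - p] x) + (Tbeta β)^[n] x := by
  have hβ0 : (0:ℝ) < β := by linarith
  set k := kstar β x n
  set m := n - k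
  set t := tseq β m
  have htb := tseq_bounds hβ m
  have hTm1 : (β ^ (t+1))⁻¹ < (Tbeta β)^[m] 1 := by
    have h2 := htb.2
    have hpos : (0:ℝ) < β ^ (t+1) := pow_pos hβ0 _
    rw [inv_lt_iff_one_lt_mul₀ hpos] -- check name
    linarith [h2]
  intro p
  induction p using Nat.strong_induction_on with
  | _ p ih =>
    intro hpn
    set j := n - p with hj
    have hjn : j ≤ n := Nat.sub_le n p
    have hnjp : n - j = p := by omega
    by_cases hmatch : ∀ i < p, eps β x (j + i) = eps β 1 i
    · -- matching case : sum = T^[p] 1 ≥ T^[m] 1 > (β^(t+1))⁻¹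
      have hge : (Tbeta β)^[m] 1 ≤ (Tbeta β)^[p] 1 := by
        have := Tpow_one_ge hβ hx hjn (by rw [hnjp]; exact hmatch)
        rwa [hnjp] at this
      -- digits of y = T^[j] x match 1 for p digits
      have hdig : ∀ i < p, eps β ((Tbeta β)^[j] x) i = eps β 1 i := by
        intro i hi; rw [eps_shift]; exact hmatch i hi
      have haff := iter_sub β p hdig
      have hTn : (Tbeta β)^[p] ((Tbeta β)^[j] x) = (Tbeta β)^[n] x := by
        rw [← Function.iterate_add_apply, show p + j = n by omega]
      rw [hTn] at haff
      -- sum = T^[p] 1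
      have : β ^ p * (1 - (Tbeta β)^[j] x) + (Tbeta β)^[n] x = (Tbeta β)^[p] 1 := by
        nlinarith [haff]
      rw [this]
      linarith [hTm1, hge]
    · -- mismatch case
      push_neg at hmatch
      have hex : ∃ i, i < p ∧ eps β x (j + i) ≠ eps β 1 i := hmatch
      classical
      set i0 := Nat.find hex with hi0def
      obtain ⟨hi0p, hi0ne⟩ := Nat.find_spec hex
      have hmin : ∀ i' < i0, eps β x (j + i') = eps β 1 i' := by
        intro i' hi'
        have := Nat.find_min hex hi'
        push_neg at this
        exact this (by omega)
      set y := (Tbeta β)^[j] x with hy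
      have hymem : y ∈ Ioc (0:ℝ) 1 := iter_mem hx j
      have hdig : ∀ i < i0, eps β y i = eps β 1 i := by
        intro i hi; rw [hy, eps_shift]; exact hmin i hi
      have haff := iter_sub β i0 hdig
      -- T^[i0] y ≤ T^[i0] 1
      have hTle : (Tbeta β)^[i0] y ≤ (Tbeta β)^[i0] 1 := by
        have hpow : (0:ℝ) < β ^ i0 := pow_pos hβ0 _
        nlinarith [hymem.2]
      -- digit comparison
      have hepsy : eps β y i0 = eps β x (j + i0) := by rw [hy, eps_shift]
      have hceil : ⌈β * (Tbeta β)^[i0] y⌉ ≤ ⌈β * (Tbeta β)^[i0] 1⌉ :=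
        Int.ceil_le_ceil (by nlinarith)
      have hlt : eps β y i0 + 1 ≤ eps β 1 i0 := by
        have h1 : eps β y i0 ≤ eps β 1 i0 := by simp only [eps]; omega
        have h2 : eps β y i0 ≠ eps β 1 i0 := by rw [hepsy]; exact hi0ne
        omega
      -- key: β^(i0+1) (1 - y) ≥ 1 - T^[i0+1] y
      have hkey : 1 - (Tbeta β)^[i0+1] y ≤ β^(i0+1) * (1 - y) := by
        have e1 := iterate_succ_eq β 1 i0
        have e2 := iterate_succ_eq β y i0
        have hT1pos : (0:ℝ) < (Tbeta β)^[i0+1] 1 := (iter_mem (β := β) one_mem_Ioc (i0+1)).1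
        have hlt' : (eps β y i0 : ℝ) + 1 ≤ (eps β 1 i0 : ℝ) := by exact_mod_cast hlt
        have haff' : β * ((Tbeta β)^[i0] 1 - (Tbeta β)^[i0] y) = β * (β^i0 * (1 - y)) := by
          rw [show (Tbeta β)^[i0] 1 - (Tbeta β)^[i0] y = β^i0 * (1-y) by linarith [haff]]
        rw [pow_succ]
        nlinarith [haff']
      -- apply IH at p' = p - i0 - 1
      set p' := p - i0 - 1 with hp'
      have hp'lt : p' < p := by omega
      have hIH := ih p' hp'lt (by omega)
      have hj' : n - p' = j + i0 + 1 := by omega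
      rw [hj'] at hIH
      have hTj' : (Tbeta β)^[j + i0 + 1] x = (Tbeta β)^[i0+1] y := by
        rw [hy, ← Function.iterate_add_apply, show i0 + 1 + j = j + i0 + 1 by omega]
      rw [hTj'] at hIH
      -- combine: β^p (1-y) = β^p' * β^(i0+1) (1-y) ≥ β^p' (1 - T^[i0+1] y)
      have hpowp : β ^ p = β ^ p' * β ^ (i0+1) := by
        rw [← pow_add, show p' + (i0+1) = p by omega]
      have hp'pos : (0:ℝ) ≤ β ^ p' := (pow_pos hβ0 p').le
      have : β ^ p' * (1 - (Tbeta β)^[i0+1] y) ≤ β ^ p * (1 - y) := by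
        rw [hpowp, mul_assoc]
        exact mul_le_mul_of_nonneg_left hkey hp'pos
      linarith [hIH, this]

-- from e.lean
lemma Ioc_subset_In {β x : ℝ} (hβ : 1 < β) (hx : x ∈ Ioc (0:ℝ) 1) (n : ℕ) {δ : ℝ}
    (hδ : δ ≤ (β ^ (n + tseq β (n - kstar β x n) + 1))⁻¹) :
    Ioc (x - (β^n)⁻¹ * (Tbeta β)^[n] x) (x - (β^n)⁻¹ * (Tbeta β)^[n] x + δ) ⊆ In β x n := by
  have hβ0 : (0:ℝ) < β := by linarith
  set t := tseq β (n - kstar β x n)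
  intro y hy
  rw [mem_In_iff hx n y]
  intro j hj
  have hbj : (0:ℝ) < β ^ j := pow_pos hβ0 j
  have hbnj : (0:ℝ) < β ^ (n - j) := pow_pos hβ0 (n-j)
  have hbn : β ^ n = β ^ j * β ^ (n - j) := by rw [← pow_add, Nat.add_sub_cancel' hj]
  have hTn := iter_mem (β := β) hx n
  have hTj := iter_mem (β := β) hx j
  constructor
  · -- positivity
    have h1 : (Tbeta β)^[n] x ≤ β ^ (n-j) * (Tbeta β)^[j] x := by
      have := iter_le hβ0 hx j (n - j)
      rwa [Nat.add_sub_cancel' hj] at this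
    have h2 : x - (β^n)⁻¹ * (Tbeta β)^[n] x < y := hy.1
    have h3 : β ^ j * (β^n)⁻¹ * (Tbeta β)^[n] x ≤ (Tbeta β)^[j] x := by
      rw [hbn, mul_inv]
      have : β ^ j * (β ^ j)⁻¹ * (β ^ (n-j))⁻¹ * (Tbeta β)^[n] x
          = (β ^ (n-j))⁻¹ * (Tbeta β)^[n] x := by
        rw [mul_inv_cancel₀ hbj.ne']; ring
      calc β ^ j * ((β ^ j)⁻¹ * (β ^ (n-j))⁻¹) * (Tbeta β)^[n] x
          = (β ^ (n-j))⁻¹ * (Tbeta β)^[n] x := by rw [← mul_assoc]; exact this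
        _ ≤ (β ^ (n-j))⁻¹ * (β ^ (n-j) * (Tbeta β)^[j] x) :=
            mul_le_mul_of_nonneg_left h1 (inv_nonneg.mpr hbnj.le)
        _ = (Tbeta β)^[j] x := by field_simp
    nlinarith [mul_lt_mul_of_pos_left (sub_lt_iff_lt_add.mpr (by linarith [h2] : x < y + (β^n)⁻¹ * (Tbeta β)^[n] x)) hbj]
  · -- upper bound ≤ 1
    have hcore := core_ineq hβ hx n (n - j) (Nat.sub_le n j)
    rw [show n - (n - j) = j from by omega] at hcore
    have hδ' : β ^ j * δ ≤ (β ^ (n-j))⁻¹ * (β ^ (t + 1))⁻¹ := by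
      have h0 : β ^ (n + t + 1) = β ^ j * (β ^ (n - j) * β ^ (t+1)) := by
        rw [← pow_add, ← pow_add]; congr 1; omega
      have h1 : (β ^ (n + t + 1))⁻¹ = (β^j)⁻¹ * ((β ^ (n-j))⁻¹ * (β ^ (t+1))⁻¹) := by
        rw [h0, mul_inv, mul_inv]
      calc β ^ j * δ ≤ β ^ j * (β ^ (n + t + 1))⁻¹ := mul_le_mul_of_nonneg_left hδ hbj.le
        _ = (β ^ (n-j))⁻¹ * (β ^ (t+1))⁻¹ := by rw [h1, ← mul_assoc, mul_inv_cancel₀ hbj.ne', one_mul]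
    have hy2 : y - x ≤ δ - (β^n)⁻¹ * (Tbeta β)^[n] x := by linarith [hy.2]
    have h3 : β ^ j * (β^n)⁻¹ * (Tbeta β)^[n] x = (β ^ (n-j))⁻¹ * (Tbeta β)^[n] x := by
      rw [hbn, mul_inv, ← mul_assoc, mul_inv_cancel₀ hbj.ne', one_mul]
    have h4 : β ^ j * (y - x) ≤ (β ^ (n-j))⁻¹ * (β ^ (t+1))⁻¹ - (β ^ (n-j))⁻¹ * (Tbeta β)^[n] x := by
      calc β ^ j * (y - x) ≤ β ^ j * (δ - (β^n)⁻¹ * (Tbeta β)^[n] x) :=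
            mul_le_mul_of_nonneg_left hy2 hbj.le
        _ = β ^ j * δ - β ^ j * (β^n)⁻¹ * (Tbeta β)^[n] x := by ring
        _ ≤ (β ^ (n-j))⁻¹ * (β ^ (t+1))⁻¹ - (β ^ (n-j))⁻¹ * (Tbeta β)^[n] x := by
            rw [h3]; linarith [hδ']
    -- from core : (β^(t+1))⁻¹ ≤ β^(n-j) (1 - T^j x) + T^n x
    have h5 : (β ^ (n-j))⁻¹ * (β ^ (t+1))⁻¹
        ≤ (1 - (Tbeta β)^[j] x) + (β ^ (n-j))⁻¹ * (Tbeta β)^[n] x := by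
      have := mul_le_mul_of_nonneg_left hcore (inv_nonneg.mpr hbnj.le)
      calc (β ^ (n-j))⁻¹ * (β ^ (t+1))⁻¹
          ≤ (β ^ (n-j))⁻¹ * (β ^ (n-j) * (1 - (Tbeta β)^[j] x) + (Tbeta β)^[n] x) := this
        _ = (β ^ (n-j))⁻¹ * β ^ (n-j) * (1 - (Tbeta β)^[j] x) + (β ^ (n-j))⁻¹ * (Tbeta β)^[n] x := by ring
        _ = (1 - (Tbeta β)^[j] x) + (β ^ (n-j))⁻¹ * (Tbeta β)^[n] x := by
            rw [inv_mul_cancel₀ hbnj.ne', one_mul]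
    linarith [h4, h5]
lemma Ioc_x_subset_In {β x : ℝ} (hβ : 1 < β) (hx : x ∈ Ioc (0:ℝ) 1) (n : ℕ) :
    Ioc (x - (β^n)⁻¹ * (Tbeta β)^[n] x) x ⊆ In β x n := by
  have hβ0 : (0:ℝ) < β := by linarith
  intro y hy
  rw [mem_In_iff hx n y]
  intro j hj
  have hbj : (0:ℝ) < β ^ j := pow_pos hβ0 j
  have hbnj : (0:ℝ) < β ^ (n - j) := pow_pos hβ0 (n-j)
  have hbn : β ^ n = β ^ j * β ^ (n - j) := by rw [← pow_add, Nat.add_sub_cancel' hj]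
  have hTj := iter_mem (β := β) hx j
  constructor
  · have h1 : (Tbeta β)^[n] x ≤ β ^ (n-j) * (Tbeta β)^[j] x := by
      have := iter_le hβ0 hx j (n - j)
      rwa [Nat.add_sub_cancel' hj] at this
    have h2 : x - (β^n)⁻¹ * (Tbeta β)^[n] x < y := hy.1
    have h3 : β ^ j * (β^n)⁻¹ * (Tbeta β)^[n] x ≤ (Tbeta β)^[j] x := by
      rw [hbn, mul_inv, ← mul_assoc, mul_inv_cancel₀ hbj.ne', one_mul]
      calc (β ^ (n-j))⁻¹ * (Tbeta β)^[n] x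
          ≤ (β ^ (n-j))⁻¹ * (β ^ (n-j) * (Tbeta β)^[j] x) :=
            mul_le_mul_of_nonneg_left h1 (inv_nonneg.mpr hbnj.le)
        _ = (Tbeta β)^[j] x := by field_simp
    nlinarith [mul_lt_mul_of_pos_left (show x < y + (β^n)⁻¹ * (Tbeta β)^[n] x by linarith [h2]) hbj]
  · have h2 : y ≤ x := hy.2
    have : β ^ j * (y - x) ≤ 0 := mul_nonpos_of_nonneg_of_nonpos hbj.le (by linarith)
    linarith [hTj.2]
lemma In_subset_Ioc {β x : ℝ} (hβ : 1 < β) (hx : x ∈ Ioc (0:ℝ) 1) (n : ℕ) :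
    In β x n ⊆ Ioc (x - (β^n)⁻¹ * (Tbeta β)^[n] x)
      (x - (β^n)⁻¹ * (Tbeta β)^[n] x + (β ^ (n + tseq β (n - kstar β x n)))⁻¹) := by
  have hβ0 : (0:ℝ) < β := by linarith
  set k := kstar β x n with hk
  obtain ⟨hkn, hkm⟩ := kstar_spec β x n
  set m := n - k with hm
  set t := tseq β m with ht
  have hbn : (0:ℝ) < β ^ n := pow_pos hβ0 n
  have hbk : (0:ℝ) < β ^ k := pow_pos hβ0 k
  have hbm : (0:ℝ) < β ^ m := pow_pos hβ0 m
  have hbt : (0:ℝ) < β ^ t := pow_pos hβ0 t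
  have hkmn : k + m = n := by omega
  -- T^n x = T^m 1 - β^m (1 - T^k x)
  have hdig : ∀ i < m, eps β ((Tbeta β)^[k] x) i = eps β 1 i := by
    intro i hi
    have : eps β ((Tbeta β)^[k] x) i = eps β x (k + i) := by
      simp only [eps, ← Function.iterate_add_apply]
      rw [Nat.add_comm i k]
    rw [this]; exact hkm i hi
  have haff := iter_sub β m hdig
  have hTnm : (Tbeta β)^[m] ((Tbeta β)^[k] x) = (Tbeta β)^[n] x := by
    rw [← Function.iterate_add_apply, show m + k = n by omega]
  rw [hTnm] at haff
  intro y hy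
  have hcrit := (mem_In_iff hx n y).mp hy
  have hn' := hcrit n le_rfl
  have hk' := hcrit k hkn
  constructor
  · -- y > L
    have h2 : -(Tbeta β)^[n] x < β^n * (y - x) := by linarith [hn'.1]
    have h3 := mul_lt_mul_of_pos_left h2 (inv_pos.mpr hbn)
    rw [← mul_assoc, inv_mul_cancel₀ hbn.ne', one_mul] at h3
    have h4 : (β^n)⁻¹ * -(Tbeta β)^[n] x = -((β^n)⁻¹ * (Tbeta β)^[n] x) := by ring
    rw [h4] at h3
    linarith
  · -- y ≤ L + (β^(n+t))⁻¹
    have h1 : y ≤ x + (β^k)⁻¹ * (1 - (Tbeta β)^[k] x) := by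
      have := hk'.2
      have h2 : β ^ k * (y - x) ≤ 1 - (Tbeta β)^[k] x := by linarith
      have h3 := mul_le_mul_of_nonneg_left h2 (inv_nonneg.mpr hbk.le)
      rw [← mul_assoc, inv_mul_cancel₀ hbk.ne', one_mul] at h3
      linarith
    -- (β^k)⁻¹ (1-T^kx) + (β^n)⁻¹ T^n x = (β^n)⁻¹ T^m 1 ≤ (β^(n+t))⁻¹
    have hsplit : β ^ n = β ^ k * β ^ m := by rw [← pow_add, hkmn]
    have heq : (β^k)⁻¹ * (1 - (Tbeta β)^[k] x) + (β^n)⁻¹ * (Tbeta β)^[n] x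
        = (β^n)⁻¹ * (Tbeta β)^[m] 1 := by
      have hTn : (Tbeta β)^[n] x = (Tbeta β)^[m] 1 + β^m * ((Tbeta β)^[k] x - 1) := by
        linarith [haff]
      rw [hTn, hsplit, mul_inv]
      field_simp
      ring
    have hle : (Tbeta β)^[m] 1 ≤ (β^t)⁻¹ := by
      have := (tseq_bounds hβ m).1
      rw [← ht] at this
      have h4 := mul_le_mul_of_nonneg_left this (inv_nonneg.mpr hbt.le)
      rw [← mul_assoc, inv_mul_cancel₀ hbt.ne', one_mul] at h4
      linarith
    have hfin : (β^n)⁻¹ * (Tbeta β)^[m] 1 ≤ (β ^ (n + t))⁻¹ := by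
      rw [pow_add, mul_inv]
      exact mul_le_mul_of_nonneg_left hle (inv_nonneg.mpr hbn.le)
    linarith [h1, heq, hfin]

-- from f.lean
lemma In_volume_ne_top (β x : ℝ) (n : ℕ) : volume (In β x n) ≠ ⊤ := by
  have h1 : In β x n ⊆ Ioc (0:ℝ) 1 := fun y hy => hy.1
  have h2 : volume (In β x n) ≤ volume (Ioc (0:ℝ) 1) := measure_mono h1
  rw [Real.volume_Ioc] at h2
  exact ne_top_of_le_ne_top (by simp) h2
lemma len_In_le {β x : ℝ} (hβ : 1 < β) (hx : x ∈ Ioc (0:ℝ) 1) (n : ℕ) :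
    len (In β x n) ≤ (β ^ (n + tseq β (n - kstar β x n)))⁻¹ := by
  have h1 : volume (In β x n) ≤ volume (Ioc (x - (β^n)⁻¹ * (Tbeta β)^[n] x) (x - (β^n)⁻¹ * (Tbeta β)^[n] x + (β ^ (n + tseq β (n - kstar β x n)))⁻¹)) := measure_mono (In_subset_Ioc hβ hx n)
  rw [Real.volume_Ioc] at h1
  have h2 : x - (β^n)⁻¹ * (Tbeta β)^[n] x + (β ^ (n + tseq β (n - kstar β x n)))⁻¹
      - (x - (β^n)⁻¹ * (Tbeta β)^[n] x) = (β ^ (n + tseq β (n - kstar β x n)))⁻¹ := by ring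
  rw [h2] at h1
  exact ENNReal.toReal_le_of_le_ofReal (inv_nonneg.mpr (pow_pos (by linarith) _).le) h1
lemma len_In_ge {β x : ℝ} (hβ : 1 < β) (hx : x ∈ Ioc (0:ℝ) 1) (n : ℕ) :
    (β ^ (n + tseq β (n - kstar β x n) + 1))⁻¹ ≤ len (In β x n) := by
  set δ := (β ^ (n + tseq β (n - kstar β x n) + 1))⁻¹ with hδ
  have hδpos : 0 < δ := inv_pos.mpr (pow_pos (by linarith) _)
  have h1 : volume (Ioc (x - (β^n)⁻¹ * (Tbeta β)^[n] x) (x - (β^n)⁻¹ * (Tbeta β)^[n] x + δ)) ≤ volume (In β x n) := measure_mono (Ioc_subset_In hβ hx n (le_refl δ))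
  rw [Real.volume_Ioc] at h1
  have h2 : x - (β^n)⁻¹ * (Tbeta β)^[n] x + δ - (x - (β^n)⁻¹ * (Tbeta β)^[n] x) = δ := by ring
  rw [h2] at h1
  calc δ = (ENNReal.ofReal δ).toReal := by rw [ENNReal.toReal_ofReal hδpos.le]
    _ ≤ len (In β x n) := ENNReal.toReal_mono (In_volume_ne_top β x n) h1
lemma len_In_ge_Tn {β x : ℝ} (hβ : 1 < β) (hx : x ∈ Ioc (0:ℝ) 1) (n : ℕ) :
    (β^n)⁻¹ * (Tbeta β)^[n] x ≤ len (In β x n) := by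
  have h1 : volume (Ioc (x - (β^n)⁻¹ * (Tbeta β)^[n] x) x) ≤ volume (In β x n) := measure_mono (Ioc_x_subset_In hβ hx n)
  rw [Real.volume_Ioc] at h1
  have h2 : x - (x - (β^n)⁻¹ * (Tbeta β)^[n] x) = (β^n)⁻¹ * (Tbeta β)^[n] x := by ring
  rw [h2] at h1
  have hpos : 0 ≤ (β^n)⁻¹ * (Tbeta β)^[n] x :=
    mul_nonneg (inv_nonneg.mpr (pow_pos (by linarith) _).le) (iter_mem hx n).1.le
  calc (β^n)⁻¹ * (Tbeta β)^[n] x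
      = (ENNReal.ofReal ((β^n)⁻¹ * (Tbeta β)^[n] x)).toReal := by rw [ENNReal.toReal_ofReal hpos]
    _ ≤ len (In β x n) := ENNReal.toReal_mono (In_volume_ne_top β x n) h1
lemma logb_inv_pow {β : ℝ} (hβ : 1 < β) (s : ℕ) : Real.logb β ((β ^ s)⁻¹) = -(s:ℝ) := by
  rw [Real.logb_inv, Real.logb_pow, Real.logb_self_eq_one hβ]
  simp
lemma neg_logb_len_bounds {β x : ℝ} (hβ : 1 < β) (hx : x ∈ Ioc (0:ℝ) 1) (n : ℕ) :
    ((n:ℝ) + tseq β (n - kstar β x n)) ≤ -Real.logb β (len (In β x n)) ∧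
      -Real.logb β (len (In β x n)) ≤ (n:ℝ) + tseq β (n - kstar β x n) + 1 := by
  set t := tseq β (n - kstar β x n)
  have h1 := len_In_le hβ hx n
  have h2 := len_In_ge hβ hx n
  have hpos : 0 < len (In β x n) := lt_of_lt_of_le (inv_pos.mpr (pow_pos (by linarith) _)) h2
  constructor
  · have := Real.logb_le_logb_of_le hβ hpos h1
    rw [logb_inv_pow hβ] at this
    push_cast at this ⊢
    linarith
  · have := Real.logb_le_logb_of_le hβ (inv_pos.mpr (pow_pos (by linarith : (0:ℝ)<β) _)) h2
    rw [logb_inv_pow hβ] at this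
    push_cast at this ⊢
    linarith
lemma neg_logb_len_le_of_digit {β x : ℝ} (hβ : 1 < β) (hx : x ∈ Ioc (0:ℝ) 1) (n : ℕ)
    (hd : 1 < β * (Tbeta β)^[n] x) :
    -Real.logb β (len (In β x n)) ≤ (n:ℝ) + 1 := by
  have h0 : (0:ℝ) < β := by linarith
  have h1 : (β ^ (n+1))⁻¹ ≤ len (In β x n) := by
    have h2 := len_In_ge_Tn hβ hx n
    have h3 : (β ^ (n+1))⁻¹ ≤ (β^n)⁻¹ * (Tbeta β)^[n] x := by
      rw [pow_succ, mul_inv]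
      have h4 : β⁻¹ ≤ (Tbeta β)^[n] x := by
        rw [inv_le_iff_one_le_mul₀ h0]
        nlinarith [hd]
      exact mul_le_mul_of_nonneg_left h4 (inv_nonneg.mpr (pow_pos h0 n).le)
    linarith
  have hpos : 0 < len (In β x n) := lt_of_lt_of_le (inv_pos.mpr (pow_pos h0 _)) h1
  have := Real.logb_le_logb_of_le hβ (inv_pos.mpr (pow_pos h0 (n+1))) h1
  rw [logb_inv_pow hβ] at this
  push_cast at this
  linarith

-- from g.lean
lemma freq_digit_nonzero {β x : ℝ} (hβ : 1 < β) (hx : x ∈ Ioc (0:ℝ) 1) :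
    ∀ N : ℕ, ∃ n, N ≤ n ∧ 1 < β * (Tbeta β)^[n] x := by
  intro N
  by_contra hcon
  push_neg at hcon
  have hgrow : ∀ j : ℕ, (Tbeta β)^[N + j] x = β ^ j * (Tbeta β)^[N] x := by
    intro j
    induction j with
    | zero => simp
    | succ j ih =>
      have h1 : β * (Tbeta β)^[N+j] x ≤ 1 := hcon (N+j) (by omega)
      have h0 : (0:ℝ) < (Tbeta β)^[N+j] x := (iter_mem hx (N+j)).1
      have heps : eps β x (N+j) = 0 := by
        have hpos : (0:ℤ) < ⌈β * (Tbeta β)^[N+j] x⌉ := Int.ceil_pos.mpr (by nlinarith)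
        have hle : ⌈β * (Tbeta β)^[N+j] x⌉ ≤ 1 := Int.ceil_le.mpr (by exact_mod_cast h1)
        simp only [eps]; omega
      have h2 := iterate_succ_eq β x (N+j)
      rw [show N + (j+1) = (N+j)+1 by ring, h2, heps, ih, pow_succ]
      push_cast; ring
  obtain ⟨M, hM⟩ : ∃ M : ℕ, 1 / (Tbeta β)^[N] x < β ^ M := pow_unbounded_of_one_lt _ hβ
  have h0 : (0:ℝ) < (Tbeta β)^[N] x := (iter_mem hx N).1
  have h1 := (iter_mem (β := β) hx (N + M)).2
  rw [hgrow M] at h1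
  rw [div_lt_iff₀ h0] at hM
  nlinarith
lemma tendsto_part2 {β x : ℝ} (hβ : 1 < β) (hx : x ∈ Ioc (0:ℝ) 1) {τv : ℝ} (nk : ℕ → ℕ)
    (hmono : StrictMono nk) (hpos : ∀ i, 0 < nk i)
    (hu : Tendsto (fun i => (tseq β (nk i - kstar β x (nk i)) : ℝ) / (nk i : ℝ)) atTop (nhds τv)) :
    Tendsto (fun i => -Real.logb β (len (In β x (nk i))) / (nk i : ℝ)) atTop (nhds (1 + τv)) := by
  have hnkR : ∀ i, (0:ℝ) < (nk i : ℝ) := fun i => by exact_mod_cast hpos i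
  have hinv : Tendsto (fun i => ((nk i : ℝ))⁻¹) atTop (nhds 0) := by
    have h1 : Tendsto (fun i => (nk i : ℝ)) atTop atTop :=
      tendsto_natCast_atTop_atTop.comp hmono.tendsto_atTop
    exact tendsto_inv_atTop_zero.comp h1
  have hlow : Tendsto (fun i => 1 + (tseq β (nk i - kstar β x (nk i)) : ℝ) / (nk i : ℝ))
      atTop (nhds (1 + τv)) := tendsto_const_nhds.add hu
  have hup : Tendsto
      (fun i => 1 + (tseq β (nk i - kstar β x (nk i)) : ℝ) / (nk i : ℝ) + ((nk i : ℝ))⁻¹)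
      atTop (nhds (1 + τv)) := by
    have h := hlow.add hinv
    rw [add_zero] at h
    exact h
  apply tendsto_of_tendsto_of_tendsto_of_le_of_le hlow hup
  · intro i
    have h := (neg_logb_len_bounds hβ hx (nk i)).1
    have h2 : ((nk i : ℝ) + tseq β (nk i - kstar β x (nk i))) / (nk i : ℝ)
        ≤ -Real.logb β (len (In β x (nk i))) / (nk i : ℝ) := by gcongr
    have h3 : ((nk i : ℝ) + tseq β (nk i - kstar β x (nk i))) / (nk i : ℝ)
        = 1 + (tseq β (nk i - kstar β x (nk i)) : ℝ) / (nk i : ℝ) := by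
      rw [add_div, div_self (hnkR i).ne']
    linarith [h2, h3.symm.le, h3.le]
  · intro i
    have h := (neg_logb_len_bounds hβ hx (nk i)).2
    have h2 : -Real.logb β (len (In β x (nk i))) / (nk i : ℝ)
        ≤ ((nk i : ℝ) + tseq β (nk i - kstar β x (nk i)) + 1) / (nk i : ℝ) := by gcongr
    have h3 : ((nk i : ℝ) + tseq β (nk i - kstar β x (nk i)) + 1) / (nk i : ℝ)
        = 1 + (tseq β (nk i - kstar β x (nk i)) : ℝ) / (nk i : ℝ) + ((nk i : ℝ))⁻¹ := by
      rw [add_div, add_div, div_self (hnkR i).ne', one_div]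
    linarith [h2, h3.le]

/-- For every `x ∈ (0,1]` there is a strictly increasing sequence of
positive integers `(n_i)` with `lim_i (−log_β |I_{n_i}(x)|)/n_i = 1 + τ(x)`; moreover,
any strictly increasing sequence `(n_i)` with `lim_i t_{n_i − k_{n_i}^*(x)}/n_i = τ(x)`
has this property. -/
theorem exists_subsequence_upperD (β : ℝ) (hβ : 1 < β) (x : ℝ) (hx : x ∈ Ioc (0:ℝ) 1) :
    (∃ nk : ℕ → ℕ, StrictMono nk ∧ (∀ i, 0 < nk i) ∧
        Tendsto (fun i => -Real.logb β (len (In β x (nk i))) / (nk i : ℝ)) atTop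
          (nhds (1 + tau β x))) ∧
      ∀ nk : ℕ → ℕ, StrictMono nk → (∀ i, 0 < nk i) →
        Tendsto (fun i => (tseq β (nk i - kstar β x (nk i)) : ℝ) / (nk i : ℝ)) atTop
          (nhds (tau β x)) →
        Tendsto (fun i => -Real.logb β (len (In β x (nk i))) / (nk i : ℝ)) atTop
          (nhds (1 + tau β x)) := by
  set u : ℕ → ℝ := fun n => (tseq β (n - kstar β x n) : ℝ) / n with hu
  have htau : tau β x = limsup u atTop := rfl
  constructor
  · -- existence
    by_cases hb : ∃ M : ℝ, ∀ n, u n ≤ M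
    · -- bounded case
      obtain ⟨M, hM⟩ := hb
      have hbdd : IsBoundedUnder (· ≤ ·) atTop u := Filter.isBoundedUnder_of ⟨M, hM⟩
      have hnonneg : ∀ n, 0 ≤ u n := by
        intro n
        exact div_nonneg (Nat.cast_nonneg _) (Nat.cast_nonneg _)
      have hcob : IsCoboundedUnder (· ≤ ·) atTop u :=
        IsBoundedUnder.isCoboundedUnder_le (Filter.isBoundedUnder_of (r := (· ≥ ·)) ⟨0, hnonneg⟩)
      set L := limsup u atTop with hL
      have hfreq : ∀ i : ℕ, ∃ᶠ n in atTop,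
          ((u n < L + 1/((i:ℝ)+1) ∧ 1 ≤ n) ∧ L - 1/((i:ℝ)+1) < u n) := by
        intro i
        have hε : (0:ℝ) < 1/((i:ℝ)+1) := by positivity
        have hE : ∀ᶠ n in atTop, u n < L + 1/((i:ℝ)+1) :=
          eventually_lt_of_limsup_lt (by linarith) hbdd
        have hF : ∃ᶠ n in atTop, L - 1/((i:ℝ)+1) < u n :=
          frequently_lt_of_lt_limsup hcob (by linarith)
        exact (hE.and (eventually_ge_atTop 1)).and_frequently hF
      obtain ⟨φ, hφmono, hφspec⟩ := Filter.extraction_forall_of_frequently hfreq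
      have hφpos : ∀ i, 0 < φ i := fun i => (hφspec i).1.2
      have hφtend : Tendsto (fun i => u (φ i)) atTop (nhds L) := by
        have hlow : Tendsto (fun i : ℕ => L - 1/((i:ℝ)+1)) atTop (nhds L) := by
          have h := (tendsto_const_nhds : Tendsto (fun _ : ℕ => L) atTop (nhds L)).sub
            tendsto_one_div_add_atTop_nhds_zero_nat
          simpa using h
        have hhigh : Tendsto (fun i : ℕ => L + 1/((i:ℝ)+1)) atTop (nhds L) := by
          have h := (tendsto_const_nhds : Tendsto (fun _ : ℕ => L) atTop (nhds L)).add
            tendsto_one_div_add_atTop_nhds_zero_nat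
          simpa using h
        apply tendsto_of_tendsto_of_tendsto_of_le_of_le hlow hhigh
        · exact fun i => (hφspec i).2.le
        · exact fun i => (hφspec i).1.1.le
      exact ⟨φ, hφmono, hφpos, tendsto_part2 hβ hx φ hφmono hφpos hφtend⟩
    · -- unbounded case : tau = 0
      push_neg at hb
      have hset : {a : ℝ | ∀ᶠ n in atTop, u n ≤ a} = ∅ := by
        ext a
        simp only [Set.mem_setOf_eq, Set.mem_empty_iff_false, iff_false]
        intro ha
        rw [Filter.eventually_atTop] at ha
        obtain ⟨N, hN⟩ := ha
        have hfin : (u '' Set.Iio N).Finite := (Set.finite_Iio N).image u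
        obtain ⟨M₀, hM₀⟩ := hfin.bddAbove
        obtain ⟨n, hn⟩ := hb (max a M₀)
        rcases lt_or_ge n N with h | h
        · have : u n ≤ M₀ := hM₀ ⟨n, h, rfl⟩
          have := le_max_right a M₀
          linarith
        · have := hN n h
          have := le_max_left a M₀
          linarith
      have htau0 : tau β x = 0 := by
        rw [htau, Filter.limsup_eq, hset, Real.sInf_empty]
      obtain ⟨φ, hφmono, hφspec⟩ := Nat.exists_strictMono_subsequence
        (P := fun n => 1 ≤ n ∧ 1 < β * (Tbeta β)^[n] x)
        (by
          intro N
          obtain ⟨n, hn1, hn2⟩ := freq_digit_nonzero hβ hx (N+1)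
          exact ⟨n, by omega, by omega, hn2⟩)
      have hφpos : ∀ i, 0 < φ i := fun i => (hφspec i).1
      refine ⟨φ, hφmono, hφpos, ?_⟩
      rw [htau0, add_zero]
      have hφR : ∀ i, (0:ℝ) < (φ i : ℝ) := fun i => by exact_mod_cast hφpos i
      have hinv : Tendsto (fun i => ((φ i : ℝ))⁻¹) atTop (nhds 0) := by
        have h1 : Tendsto (fun i => (φ i : ℝ)) atTop atTop :=
          tendsto_natCast_atTop_atTop.comp hφmono.tendsto_atTop
        exact tendsto_inv_atTop_zero.comp h1
      have hup : Tendsto (fun i => 1 + ((φ i : ℝ))⁻¹) atTop (nhds 1) := by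
        have h := (tendsto_const_nhds : Tendsto (fun _ : ℕ => (1:ℝ)) atTop (nhds 1)).add hinv
        simpa using h
      apply tendsto_of_tendsto_of_tendsto_of_le_of_le
        (tendsto_const_nhds : Tendsto (fun _ : ℕ => (1:ℝ)) atTop (nhds 1)) hup
      · intro i
        have h := (neg_logb_len_bounds hβ hx (φ i)).1
        have ht0 : (0:ℝ) ≤ tseq β (φ i - kstar β x (φ i)) := Nat.cast_nonneg _
        have h2 : (φ i : ℝ) ≤ -Real.logb β (len (In β x (φ i))) := by linarith
        have h3 : (φ i : ℝ) / (φ i : ℝ) ≤ -Real.logb β (len (In β x (φ i))) / (φ i : ℝ) := by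
          gcongr
        rwa [div_self (hφR i).ne'] at h3
      · intro i
        have h := neg_logb_len_le_of_digit hβ hx (φ i) (hφspec i).2
        have h2 : -Real.logb β (len (In β x (φ i))) / (φ i : ℝ)
            ≤ ((φ i : ℝ) + 1) / (φ i : ℝ) := by gcongr
        have h3 : ((φ i : ℝ) + 1) / (φ i : ℝ) = 1 + ((φ i : ℝ))⁻¹ := by
          rw [add_div, div_self (hφR i).ne', one_div]
        linarith [h3.le]
  · intro nk hmono hpos ht
    exact tendsto_part2 hβ hx nk hmono hpos ht
end
end

section
/- The set U is dense in [0,1]. -/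
open MeasureTheory Filter Set

noncomputable section

namespace BetaAux
variable {β x y : ℝ}

lemma Tbeta_mem (hβ : 1 < β) (hx : x ∈ Ioc (0:ℝ) 1) : Tbeta β x ∈ Ioc (0:ℝ) 1 := by
  have hb0 : (0:ℝ) < β := lt_trans one_pos hβ
  have h1 : 0 < β * x := mul_pos hb0 hx.1
  constructor
  · have := Int.ceil_lt_add_one (β * x)
    simp only [Tbeta]; linarith
  · have := Int.le_ceil (β * x)
    simp only [Tbeta]; linarith

lemma iter_mem (hβ : 1 < β) (hx : x ∈ Ioc (0:ℝ) 1) (n : ℕ) :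
    (Tbeta β)^[n] x ∈ Ioc (0:ℝ) 1 := by
  induction n with
  | zero => simpa using hx
  | succ n ih => rw [Function.iterate_succ_apply']; exact Tbeta_mem hβ ih

lemma eps_nonneg (hβ : 1 < β) (hx : x ∈ Ioc (0:ℝ) 1) (n : ℕ) : 0 ≤ eps β x n := by
  have h := iter_mem hβ hx n
  have : (0:ℤ) < ⌈β * (Tbeta β)^[n] x⌉ := by
    rw [Int.lt_ceil]; push_cast
    exact mul_pos (lt_trans one_pos hβ) h.1
  simp only [eps]; omega

lemma iter_succ' (n : ℕ) :
    (Tbeta β)^[n+1] x = β * (Tbeta β)^[n] x - eps β x n := by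
  rw [Function.iterate_succ_apply']
  simp only [Tbeta, eps]; push_cast; ring

lemma eps_bounds (n : ℕ) :
    (eps β x n : ℝ) < β * (Tbeta β)^[n] x ∧ β * (Tbeta β)^[n] x ≤ (eps β x n : ℝ) + 1 := by
  constructor
  · have := Int.ceil_lt_add_one (β * (Tbeta β)^[n] x); simp only [eps]; push_cast; linarith
  · have := Int.le_ceil (β * (Tbeta β)^[n] x); simp only [eps]; push_cast; linarith

lemma iter_le (hβ : 1 < β) (hx : x ∈ Ioc (0:ℝ) 1) (n : ℕ) :
    (Tbeta β)^[n] x ≤ β ^ n * x := by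
  induction n with
  | zero => simp
  | succ n ih =>
    have he : (0:ℝ) ≤ eps β x n := by exact_mod_cast eps_nonneg hβ hx n
    have hb0 : (0:ℝ) < β := lt_trans one_pos hβ
    rw [iter_succ']
    calc β * (Tbeta β)^[n] x - (eps β x n : ℝ) ≤ β * (Tbeta β)^[n] x := by linarith
    _ ≤ β * (β ^ n * x) := by nlinarith [hb0]
    _ = β ^ (n+1) * x := by ring

lemma eps_shift (m j : ℕ) : eps β ((Tbeta β)^[m] x) j = eps β x (m + j) := by
  simp only [eps, ← Function.iterate_add_apply, Nat.add_comm j m]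


lemma ceil_int_add {v : ℝ} (hv : v ∈ Ioc (0:ℝ) 1) (e : ℤ) : ⌈v + (e:ℝ)⌉ = e + 1 := by
  rw [Int.ceil_add_intCast]
  have h1 : ⌈v⌉ ≤ 1 := Int.ceil_le.mpr (by exact_mod_cast hv.2)
  have h2 : 0 < ⌈v⌉ := Int.lt_ceil.mpr (by exact_mod_cast hv.1)
  omega

/-- Perturbation: if all shifted iterates stay in `(0,1]`, the iterates transform affinely. -/
lemma perturb_iter (hβ : 1 < β) {ε : ℝ} {n : ℕ}
    (h : ∀ j ≤ n, (Tbeta β)^[j] x + β ^ j * ε ∈ Ioc (0:ℝ) 1) :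
    ∀ j ≤ n, (Tbeta β)^[j] (x + ε) = (Tbeta β)^[j] x + β ^ j * ε := by
  intro j hj
  induction j with
  | zero => simp
  | succ j ih =>
    have hj' : j ≤ n := Nat.le_of_succ_le hj
    have ihj := ih hj'
    have hval : β * (Tbeta β)^[j] (x + ε)
        = ((Tbeta β)^[j+1] x + β ^ (j+1) * ε) + (eps β x j : ℝ) := by
      rw [ihj, iter_succ']; ring
    have hceil : ⌈β * (Tbeta β)^[j] (x + ε)⌉ = eps β x j + 1 := by
      rw [hval]; exact ceil_int_add (h (j+1) hj) _
    rw [Function.iterate_succ_apply', Tbeta, hceil, hval]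
    push_cast; ring

lemma perturb_eps (hβ : 1 < β) {ε : ℝ} {n : ℕ}
    (h : ∀ j ≤ n, (Tbeta β)^[j] x + β ^ j * ε ∈ Ioc (0:ℝ) 1) :
    ∀ j < n, eps β (x + ε) j = eps β x j := by
  intro j hj
  have h1 := perturb_iter hβ h j (le_of_lt hj)
  have h2 := perturb_iter hβ h (j+1) hj
  have e1 : ((Tbeta β)^[j+1] (x+ε)) = β * (Tbeta β)^[j] (x+ε) - eps β (x+ε) j :=
    iter_succ' j
  have e2 : ((Tbeta β)^[j+1] x) = β * (Tbeta β)^[j] x - eps β x j := iter_succ' j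
  have : (eps β (x+ε) j : ℝ) = (eps β x j : ℝ) := by
    rw [h1] at e1
    rw [h2] at e1
    push_cast at e1 ⊢
    linear_combination e1 - e2 - ε * (pow_succ β j)
  exact_mod_cast this

/-- Tail-decrease: within the cylinder of the first `n` digits of `x`, every tail value
`t ∈ (0, T^n x]` is attained, by an explicit point. -/
lemma tail_set (hβ : 1 < β) (hx : x ∈ Ioc (0:ℝ) 1) (n : ℕ) {t : ℝ}
    (ht : 0 < t) (ht2 : t ≤ (Tbeta β)^[n] x) :
    x + (t - (Tbeta β)^[n] x) / β ^ n ∈ Ioc (0:ℝ) 1 ∧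
    (∀ j < n, eps β (x + (t - (Tbeta β)^[n] x) / β ^ n) j = eps β x j) ∧
      (Tbeta β)^[n] (x + (t - (Tbeta β)^[n] x) / β ^ n) = t := by
  have hb0 : (0:ℝ) < β := lt_trans one_pos hβ
  set ε : ℝ := (t - (Tbeta β)^[n] x) / β ^ n with hε
  have hbn : (0:ℝ) < β ^ n := pow_pos hb0 n
  have hεle : ε ≤ 0 := div_nonpos_of_nonpos_of_nonneg (by linarith) (le_of_lt hbn)
  have key : ∀ j ≤ n, (Tbeta β)^[j] x + β ^ j * ε ∈ Ioc (0:ℝ) 1 := by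
    intro j hj
    have hbj : (0:ℝ) < β ^ j := pow_pos hb0 j
    have hbc : (0:ℝ) < β ^ (n - j) := pow_pos hb0 _
    have hIj := iter_mem hβ hx j
    have hch : (Tbeta β)^[n] x ≤ β ^ (n - j) * (Tbeta β)^[j] x := by
      have h' : (Tbeta β)^[n] x = (Tbeta β)^[n - j] ((Tbeta β)^[j] x) := by
        rw [← Function.iterate_add_apply]; congr 1; omega
      rw [h']; exact iter_le hβ hIj _
    have hsplit : β ^ n = β ^ j * β ^ (n - j) := by rw [← pow_add]; congr 1; omega
    have hform : (Tbeta β)^[j] x + β ^ j * ε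
        = ((Tbeta β)^[j] x * β ^ (n - j) + (t - (Tbeta β)^[n] x)) / β ^ (n - j) := by
      rw [hε, hsplit]; field_simp
    constructor
    · rw [hform]
      apply div_pos _ hbc
      nlinarith [hIj.1]
    · have hne : β ^ j * ε ≤ 0 := mul_nonpos_of_nonneg_of_nonpos (le_of_lt hbj) hεle
      linarith [hIj.2]
  have h0 := key 0 (Nat.zero_le n)
  simp only [Function.iterate_zero_apply, pow_zero, one_mul] at h0
  refine ⟨h0, perturb_eps hβ key, ?_⟩
  have hn := perturb_iter hβ key n le_rfl
  rw [hn, hε]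
  field_simp; ring

/-- Raise-to-one: some point with the same first `n` digits has an iterate exactly `1`. -/
lemma reach_one (hβ : 1 < β) (hx : x ∈ Ioc (0:ℝ) 1) (n : ℕ) :
    ∃ x' i, x' ∈ Ioc (0:ℝ) 1 ∧ i ≤ n ∧ (∀ j < n, eps β x' j = eps β x j) ∧
      (Tbeta β)^[i] x' = 1 := by
  have hb0 : (0:ℝ) < β := lt_trans one_pos hβ
  obtain ⟨i₀, hi₀mem, hi₀min⟩ := Finset.exists_min_image (Finset.range (n+1))
    (fun j => (1 - (Tbeta β)^[j] x) / β ^ j) ⟨0, by simp⟩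
  set ε : ℝ := (1 - (Tbeta β)^[i₀] x) / β ^ i₀ with hε
  have hεnn : 0 ≤ ε := div_nonneg (by linarith [(iter_mem hβ hx i₀).2]) (le_of_lt (pow_pos hb0 _))
  have key : ∀ j ≤ n, (Tbeta β)^[j] x + β ^ j * ε ∈ Ioc (0:ℝ) 1 := by
    intro j hj
    have hbj : (0:ℝ) < β ^ j := pow_pos hb0 j
    have hIj := iter_mem hβ hx j
    constructor
    · nlinarith [hIj.1]
    · have hle : ε ≤ (1 - (Tbeta β)^[j] x) / β ^ j :=
        hi₀min j (Finset.mem_range.mpr (Nat.lt_succ_of_le hj))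
      have h2 : ε * β ^ j ≤ 1 - (Tbeta β)^[j] x := (le_div_iff₀ hbj).mp hle
      have h3 : β ^ j * ε = ε * β ^ j := mul_comm _ _
      linarith
  have h0 := key 0 (Nat.zero_le n)
  simp only [Function.iterate_zero_apply, pow_zero, one_mul] at h0
  have hi₀n : i₀ ≤ n := Nat.lt_succ_iff.mp (Finset.mem_range.mp hi₀mem)
  refine ⟨x + ε, i₀, h0, hi₀n, perturb_eps hβ key, ?_⟩
  have := perturb_iter hβ key i₀ hi₀n
  rw [this, hε]
  field_simp; ring

lemma zero_run (hβ : 1 < β) {z : ℝ} {k : ℕ} (h : ∀ j < k, eps β z j = 0) :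
    (Tbeta β)^[k] z = β ^ k * z := by
  induction k with
  | zero => simp
  | succ k ih =>
    have hk : (Tbeta β)^[k] z = β ^ k * z := ih (fun j hj => h j (Nat.lt_succ_of_lt hj))
    have := iter_succ' (β := β) (x := z) k
    rw [h k (Nat.lt_succ_self k)] at this
    rw [this, hk]; push_cast; ring

lemma one_mem : (1:ℝ) ∈ Ioc (0:ℝ) 1 := ⟨one_pos, le_refl 1⟩

lemma tseq_facts (hβ : 1 < β) (m : ℕ) :
    (∀ j < tseq β m, eps β 1 (m + j) = 0) ∧ eps β 1 (m + tseq β m) ≠ 0 := by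
  have hb0 : (0:ℝ) < β := lt_trans one_pos hβ
  set z : ℝ := (Tbeta β)^[m] 1 with hzdef
  have hz : z ∈ Ioc (0:ℝ) 1 := iter_mem hβ one_mem m
  have hshift : ∀ j, eps β 1 (m + j) = eps β z j := fun j => (eps_shift m j).symm
  obtain ⟨N, hN⟩ := pow_unbounded_of_one_lt (z⁻¹) hβ
  have hbdd : BddAbove {k : ℕ | ∀ j < k, eps β 1 (m + j) = 0} := by
    refine ⟨N, fun k hk => ?_⟩
    by_contra hlt
    push_neg at hlt
    have hk' : ∀ j < k, eps β z j = 0 := fun j hj => (hshift j) ▸ hk j hj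
    have h1 : (Tbeta β)^[k] z = β ^ k * z := zero_run hβ hk'
    have h2 : β ^ k * z ≤ 1 := h1 ▸ (iter_mem hβ hz k).2
    have h3 : β ^ N < β ^ k := pow_lt_pow_right₀ hβ hlt
    have h4 : z⁻¹ < β ^ k := lt_trans hN h3
    have : β ^ k * z < β ^ k * z := by
      calc β ^ k * z ≤ 1 := h2
      _ = z⁻¹ * z := by rw [inv_mul_cancel₀ (ne_of_gt hz.1)]
      _ < β ^ k * z := by apply mul_lt_mul_of_pos_right h4 hz.1
    exact lt_irrefl _ this
  have hmem : tseq β m ∈ {k : ℕ | ∀ j < k, eps β 1 (m + j) = 0} :=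
    Nat.sSup_mem ⟨0, fun j hj => absurd hj (Nat.not_lt_zero j)⟩ hbdd
  refine ⟨hmem, fun hcon => ?_⟩
  have : tseq β m + 1 ∈ {k : ℕ | ∀ j < k, eps β 1 (m + j) = 0} := by
    intro j hj
    rcases Nat.lt_succ_iff_lt_or_eq.mp hj with h | h
    · exact hmem j h
    · rw [h]; exact hcon
  have h5 := le_csSup hbdd this
  have h6 : tseq β m + 1 ≤ tseq β m := by simpa only [tseq] using h5
  omega

lemma T_one_lb (hβ : 1 < β) (m : ℕ) :
    (β ^ (tseq β m + 1))⁻¹ < (Tbeta β)^[m] 1 := by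
  have hb0 : (0:ℝ) < β := lt_trans one_pos hβ
  set z : ℝ := (Tbeta β)^[m] 1 with hzdef
  have hz : z ∈ Ioc (0:ℝ) 1 := iter_mem hβ one_mem m
  set t : ℕ := tseq β m with htdef
  obtain ⟨hzeros, hnz⟩ := tseq_facts hβ m
  rw [← htdef] at hnz
  have hrun : (Tbeta β)^[t] z = β ^ t * z :=
    zero_run hβ (fun j hj => (eps_shift m j) ▸ hzeros j hj)
  have hepos : 0 < eps β z t := by
    have h1 : eps β z t = eps β 1 (m + t) := eps_shift m t
    have h2 : 0 ≤ eps β 1 (m + t) := eps_nonneg hβ one_mem _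
    omega
  have hgt : 1 < β ^ (t + 1) * z := by
    by_contra hle
    push_neg at hle
    have : ⌈β * (Tbeta β)^[t] z⌉ ≤ 1 := by
      apply Int.ceil_le.mpr
      rw [hrun]; push_cast
      calc β * (β ^ t * z) = β ^ (t+1) * z := by ring
      _ ≤ 1 := hle
    simp only [eps] at hepos
    omega
  have hbp : (0:ℝ) < β ^ (t + 1) := pow_pos hb0 _
  rw [inv_lt_iff_one_lt_mul₀ hbp] at *
  · linarith [hgt, mul_comm z (β ^ (t+1))]

lemma small_digits (hβ : 1 < β) {y : ℝ} (hy : y ∈ Ioc (0:ℝ) 1) (s : ℕ) :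
    ((β ^ s)⁻¹ * y ∈ Ioc (0:ℝ) 1) ∧
    (∀ j ≤ s, (Tbeta β)^[j] ((β ^ s)⁻¹ * y) = β ^ j * ((β ^ s)⁻¹ * y)) ∧
    (∀ j < s, eps β ((β ^ s)⁻¹ * y) j = 0) ∧
    (Tbeta β)^[s] ((β ^ s)⁻¹ * y) = y := by
  have hb0 : (0:ℝ) < β := lt_trans one_pos hβ
  have hbs : (0:ℝ) < β ^ s := pow_pos hb0 s
  set w : ℝ := (β ^ s)⁻¹ * y with hw
  have hval : ∀ j ≤ s, β ^ j * w ∈ Ioc (0:ℝ) 1 := by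
    intro j hj
    constructor
    · exact mul_pos (pow_pos hb0 j) (mul_pos (inv_pos.mpr hbs) hy.1)
    · have h1 : β ^ j ≤ β ^ s := pow_le_pow_right₀ (le_of_lt hβ) hj
      rw [hw]
      calc β ^ j * ((β ^ s)⁻¹ * y) ≤ β ^ s * ((β ^ s)⁻¹ * y) := by
            exact mul_le_mul_of_nonneg_right h1
              (le_of_lt (mul_pos (inv_pos.mpr hbs) hy.1))
      _ = y := by field_simp
      _ ≤ 1 := hy.2
  have hiter : ∀ j ≤ s, (Tbeta β)^[j] w = β ^ j * w := by
    intro j hj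
    induction j with
    | zero => simp
    | succ j ih =>
      have hj' : j ≤ s := Nat.le_of_succ_le hj
      have hihj := ih hj'
      rw [Function.iterate_succ_apply', hihj, Tbeta]
      have hmem : β * (β ^ j * w) ∈ Ioc (0:ℝ) 1 := by
        have h' := hval (j+1) hj
        rw [pow_succ] at h'
        have he : β * (β ^ j * w) = β ^ j * β * w := by ring
        rw [he]; exact h'
      have hceil : ⌈β * (β ^ j * w)⌉ = 1 := by
        have h1 : ⌈β * (β ^ j * w)⌉ ≤ 1 := Int.ceil_le.mpr (by exact_mod_cast hmem.2)
        have h2 : 0 < ⌈β * (β ^ j * w)⌉ := Int.lt_ceil.mpr (by exact_mod_cast hmem.1)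
        omega
      rw [hceil]; push_cast; ring
  have hmem0 : w ∈ Ioc (0:ℝ) 1 := by simpa using hval 0 (Nat.zero_le s)
  refine ⟨hmem0, hiter, ?_, ?_⟩
  · intro j hj
    have h1 : eps β w j = ⌈β * (β ^ j * w)⌉ - 1 := by
      rw [eps, hiter j (le_of_lt hj)]
    have hmem : β * (β ^ j * w) ∈ Ioc (0:ℝ) 1 := by
      have h' := hval (j+1) hj
      rw [pow_succ] at h'
      have he : β * (β ^ j * w) = β ^ j * β * w := by ring
      rw [he]; exact h'
    have h2 : ⌈β * (β ^ j * w)⌉ ≤ 1 := Int.ceil_le.mpr (by exact_mod_cast hmem.2)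
    have h3 : 0 < ⌈β * (β ^ j * w)⌉ := Int.lt_ceil.mpr (by exact_mod_cast hmem.1)
    omega
  · rw [hiter s le_rfl, hw]
    field_simp

lemma iter_sub {y₁ y₂ : ℝ} {n : ℕ} (h : ∀ j < n, eps β y₁ j = eps β y₂ j) :
    (Tbeta β)^[n] y₁ - (Tbeta β)^[n] y₂ = β ^ n * (y₁ - y₂) := by
  induction n with
  | zero => simp
  | succ n ih =>
    have hn := ih (fun j hj => h j (Nat.lt_succ_of_lt hj))
    have e1 := iter_succ' (β := β) (x := y₁) n
    have e2 := iter_succ' (β := β) (x := y₂) n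
    have hc : ((eps β y₁ n : ℤ) : ℝ) = ((eps β y₂ n : ℤ) : ℝ) := by
      exact_mod_cast h n (Nat.lt_succ_self n)
    rw [e1, e2, hc, pow_succ]
    linear_combination β * hn

lemma dist_le (hβ : 1 < β) {y₁ y₂ : ℝ} (h1 : y₁ ∈ Ioc (0:ℝ) 1) (h2 : y₂ ∈ Ioc (0:ℝ) 1)
    {n : ℕ} (h : ∀ j < n, eps β y₁ j = eps β y₂ j) : |y₁ - y₂| ≤ (β ^ n)⁻¹ := by
  have hb0 : (0:ℝ) < β := lt_trans one_pos hβ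
  have hbn : (0:ℝ) < β ^ n := pow_pos hb0 n
  have key := iter_sub (β := β) h
  have hm1 := iter_mem hβ h1 n
  have hm2 := iter_mem hβ h2 n
  have habs : |(Tbeta β)^[n] y₁ - (Tbeta β)^[n] y₂| ≤ 1 :=
    abs_le.mpr ⟨by linarith [hm1.1, hm2.2], by linarith [hm1.2, hm2.1]⟩
  rw [key, abs_mul, abs_of_pos hbn] at habs
  rw [← le_div_iff₀' hbn] at habs
  simpa [one_div] using habs

/-- Concatenation: a point whose digits are the first `n` digits of `x`,
then `s` zeros, then the digits of `y`. -/
lemma concat (hβ : 1 < β) (hx : x ∈ Ioc (0:ℝ) 1) {y : ℝ} (hy : y ∈ Ioc (0:ℝ) 1)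
    (n s : ℕ) (h : (β ^ s)⁻¹ ≤ (Tbeta β)^[n] x) :
    ∃ x', x' ∈ Ioc (0:ℝ) 1 ∧ (∀ j < n, eps β x' j = eps β x j) ∧
      (∀ j < s, eps β x' (n + j) = 0) ∧ (∀ j, eps β x' (n + s + j) = eps β y j) ∧
      |x' - x| ≤ (β ^ n)⁻¹ := by
  have hb0 : (0:ℝ) < β := lt_trans one_pos hβ
  have hbs : (0:ℝ) < β ^ s := pow_pos hb0 s
  have hbn : (0:ℝ) < β ^ n := pow_pos hb0 n
  obtain ⟨hwmem, hwiter, hweps, hws⟩ := small_digits hβ hy s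
  set t : ℝ := (β ^ s)⁻¹ * y with htdef
  have ht : 0 < t := mul_pos (inv_pos.mpr hbs) hy.1
  have ht2 : t ≤ (Tbeta β)^[n] x := by
    calc t ≤ (β ^ s)⁻¹ * 1 := by
          exact mul_le_mul_of_nonneg_left hy.2 (le_of_lt (inv_pos.mpr hbs))
    _ = (β ^ s)⁻¹ := mul_one _
    _ ≤ (Tbeta β)^[n] x := h
  obtain ⟨hx'mem, hx'eps, hx'n⟩ := tail_set hβ hx n ht ht2
  set x' : ℝ := x + (t - (Tbeta β)^[n] x) / β ^ n with hx'def
  refine ⟨x', hx'mem, hx'eps, ?_, ?_, ?_⟩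
  · intro j hj
    have : eps β x' (n + j) = eps β ((Tbeta β)^[n] x') j := (eps_shift n j).symm
    rw [this, hx'n]
    exact hweps j hj
  · intro j
    have h1 : eps β x' (n + s + j) = eps β ((Tbeta β)^[n + s] x') j := (eps_shift _ j).symm
    have h2 : (Tbeta β)^[n + s] x' = y := by
      rw [Nat.add_comm n s, Function.iterate_add_apply, hx'n]
      exact hws
    rw [h1, h2]
  · have heq : x' - x = (t - (Tbeta β)^[n] x) / β ^ n := by rw [hx'def]; ring
    rw [heq, abs_div, abs_of_pos hbn]
    have hTn := iter_mem hβ hx n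
    have habs : |t - (Tbeta β)^[n] x| ≤ 1 :=
      abs_le.mpr ⟨by linarith [hTn.2, ht], by linarith [hTn.1, ht2]⟩
    calc |t - (Tbeta β)^[n] x| / β ^ n ≤ 1 / β ^ n := by gcongr
    _ = (β ^ n)⁻¹ := one_div _

lemma intIn01_mono {S S' : Set ℝ} (h : S ⊆ S') : intIn01 S ⊆ intIn01 S' :=
  diff_subset_diff_right (closure_mono (diff_subset_diff_right h))

lemma intIn01_subset_Icc (S : Set ℝ) : intIn01 S ⊆ Icc 0 1 := diff_subset

lemma intIn01_subset {S : Set ℝ} : intIn01 S ⊆ S ∪ (Icc 0 1)ᶜ := by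
  intro z hz
  by_cases hzS : z ∈ S
  · exact Or.inl hzS
  · exact absurd (subset_closure (show z ∈ Icc 0 1 \ S from ⟨hz.1, hzS⟩)) hz.2

/-- There is a point in the relative interior of the order-`N` basic interval of `x'`,
within `β^{-N}` of `x'`. -/
lemma interior_point (hβ : 1 < β) {x' : ℝ} (hx' : x' ∈ Ioc (0:ℝ) 1) (N : ℕ) :
    ∃ p, p ∈ intIn01 {z | z ∈ Ioc (0:ℝ) 1 ∧ ∀ j < N, eps β z j = eps β x' j} ∧
      |p - x'| ≤ (β ^ N)⁻¹ := by
  have hb0 : (0:ℝ) < β := lt_trans one_pos hβ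
  have hbN : (0:ℝ) < β ^ N := pow_pos hb0 N
  set S : Set ℝ := {z | z ∈ Ioc (0:ℝ) 1 ∧ ∀ j < N, eps β z j = eps β x' j} with hS
  set c : ℝ := (Tbeta β)^[N] x' / β ^ N with hc
  have hTN := iter_mem hβ hx' N
  have hc0 : 0 < c := div_pos hTN.1 hbN
  have hcle : c ≤ (β ^ N)⁻¹ := by
    rw [hc, div_le_iff₀ hbN, inv_mul_cancel₀ (ne_of_gt hbN)]
    exact hTN.2
  have hsub : Ioc (x' - c) x' ⊆ S := by
    intro z hz
    set t : ℝ := (Tbeta β)^[N] x' - β ^ N * (x' - z) with ht'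
    have ht : 0 < t := by
      have h1 : β ^ N * (x' - z) < β ^ N * c := by
        apply mul_lt_mul_of_pos_left _ hbN
        linarith [hz.1]
      rw [hc] at h1
      rw [ht']
      have : β ^ N * ((Tbeta β)^[N] x' / β ^ N) = (Tbeta β)^[N] x' := by field_simp
      linarith [this ▸ h1]
    have ht2 : t ≤ (Tbeta β)^[N] x' := by
      have : 0 ≤ β ^ N * (x' - z) := mul_nonneg (le_of_lt hbN) (by linarith [hz.2])
      rw [ht']; linarith
    obtain ⟨hmem, hdig, _⟩ := tail_set hβ hx' N ht ht2
    have hzeq : x' + (t - (Tbeta β)^[N] x') / β ^ N = z := by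
      rw [ht']; field_simp; ring
    rw [hzeq] at hmem hdig
    exact ⟨hmem, hdig⟩
  refine ⟨x' - c / 2, ⟨?_, ?_⟩, ?_⟩
  · have : x' - c / 2 ∈ Ioc (x' - c) x' := ⟨by linarith, by linarith⟩
    have hmem := (hsub this).1
    exact ⟨le_of_lt hmem.1, hmem.2⟩
  · have hcl : closure (Icc (0:ℝ) 1 \ S) ⊆ (Ioo (x' - c) x')ᶜ := by
      apply closure_minimal _ (isClosed_compl_iff.mpr isOpen_Ioo)
      intro u hu hmem
      exact hu.2 (hsub ⟨hmem.1, le_of_lt hmem.2⟩)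
    intro hcon
    exact (hcl hcon) ⟨by linarith, by linarith⟩
  · rw [abs_sub_comm]
    have : |x' - (x' - c / 2)| = c / 2 := by
      rw [abs_of_nonneg (by linarith)]; ring
    rw [this]; linarith

lemma getD_map_range {f : ℕ → ℤ} {n j : ℕ} (h : j < n) :
    ((List.range n).map f).getD j 0 = f j := by
  rw [List.getD_eq_getElem _ _ (by simpa using h)]
  simp

lemma getD_replicate0 (s j : ℕ) : (List.replicate s (0:ℤ)).getD j 0 = 0 := by
  rcases lt_or_ge j s with h | h
  · rw [List.getD_eq_getElem _ _ (by simpa using h)]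
    simp
  · rw [List.getD_eq_default _ _ (by simpa using h)]

lemma mem_cyl_concat (hβ : 1 < β) {x' : ℝ} (hx' : x' ∈ Ioc (0:ℝ) 1)
    (w : List ℤ) (s : ℕ) (J : List ℤ)
    (h1 : ∀ j < w.length, eps β x' j = w.getD j 0)
    (h2 : ∀ j < s, eps β x' (w.length + j) = 0)
    (h3 : ∀ j < J.length, eps β x' (w.length + s + j) = J.getD j 0) :
    x' ∈ cyl β (w ++ List.replicate s 0 ++ J) := by
  refine ⟨hx', ?_⟩
  intro j hj
  simp only [List.length_append, List.length_replicate] at hj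
  by_cases hj1 : j < w.length
  · rw [List.getD_append _ _ _ _ (by simp [List.length_append, List.length_replicate]; omega),
      List.getD_append _ _ _ _ hj1]
    exact h1 j hj1
  · by_cases hj2 : j < w.length + s
    · rw [List.getD_append _ _ _ _ (by simp [List.length_append, List.length_replicate]; omega),
        List.getD_append_right _ _ _ _ (by omega), getD_replicate0]
      have hj' : w.length + (j - w.length) = j := by omega
      have := h2 (j - w.length) (by omega)
      rw [hj'] at this
      exact this
    · rw [List.getD_append_right _ _ _ _
        (by simp [List.length_append, List.length_replicate]; omega)]
      have hlen : (w ++ List.replicate s (0:ℤ)).length = w.length + s := by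
        simp [List.length_append, List.length_replicate]
      rw [hlen]
      have hj' : w.length + s + (j - (w.length + s)) = j := by omega
      have := h3 (j - (w.length + s)) (by omega)
      rw [hj'] at this
      exact this

lemma omega_adm (hβ : 1 < β) (ms : List ℕ) :
    ∃ y, y ∈ cyl β ((ms.map (fun m' =>
      estarWord β m' ++ List.replicate (tseq β m' + 1) 0)).flatten) := by
  induction ms with
  | nil =>
    refine ⟨1, one_mem, ?_⟩
    intro j hj
    simp at hj
  | cons m' ms ih =>
    obtain ⟨y, hy⟩ := ih
    have hy1 : y ∈ Ioc (0:ℝ) 1 := hy.1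
    obtain ⟨x', hx'1, hd1, hd2, hd3, _⟩ :=
      concat hβ one_mem hy1 m' (tseq β m' + 1) (le_of_lt (T_one_lb hβ m'))
    set J : List ℤ := ((ms.map (fun m'' =>
      estarWord β m'' ++ List.replicate (tseq β m'' + 1) 0)).flatten) with hJ
    have hlen : (estarWord β m').length = m' := by simp [estarWord]
    have hmem : x' ∈ cyl β (estarWord β m' ++ List.replicate (tseq β m' + 1) 0 ++ J) := by
      apply mem_cyl_concat hβ hx'1
      · intro j hj
        rw [hlen] at hj
        rw [estarWord, getD_map_range hj]
        exact hd1 j hj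
      · intro j hj
        rw [hlen]
        exact hd2 j hj
      · intro j hj
        rw [hlen]
        exact (hd3 (j)).trans (hy.2 j hj)
    refine ⟨x', ?_⟩
    have heq : ((m' :: ms).map (fun m'' =>
        estarWord β m'' ++ List.replicate (tseq β m'' + 1) 0)).flatten
        = estarWord β m' ++ List.replicate (tseq β m' + 1) 0 ++ J := by
      simp [hJ, List.append_assoc]
    rw [heq]
    exact hmem

lemma key_density (hβ : 1 < β) (m : ℕ → ℕ) (n : ℕ) {z : ℝ} (hz : z ∈ Icc (0:ℝ) 1)
    {ε : ℝ} (hε : 0 < ε) :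
    ∃ p, p ∈ (⋃ k : ℕ, ⋃ (_ : n ≤ k ∧ 1 ≤ k), ⋃ w : List ℤ,
        ⋃ (_ : w.length = k ∧ Admissible β w),
          intIn01 (cyl β (w ++ List.replicate (Gam β k + 1) 0 ++
            ((List.range k).map (fun j =>
              estarWord β (m (j + 1)) ++ List.replicate (tseq β (m (j + 1)) + 1) 0)).flatten)))
      ∧ |p - z| < ε := by
  have hb0 : (0:ℝ) < β := lt_trans one_pos hβ
  -- a point x ∈ (0,1] with |x - z| ≤ ε/2
  set c : ℝ := min (ε/2) 1 with hcdef
  have hc0 : 0 < c := lt_min (by linarith) one_pos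
  set x : ℝ := max z c with hxdef
  have hx : x ∈ Ioc (0:ℝ) 1 := ⟨lt_of_lt_of_le hc0 (le_max_right z c),
    max_le hz.2 (min_le_right _ _)⟩
  have hxz : |x - z| ≤ ε/2 := by
    rw [abs_of_nonneg (by simp [hxdef, le_max_left])]
    have h1 : x ≤ z + c := max_le (by linarith [hc0]) (by linarith [hz.1])
    have h2 : c ≤ ε/2 := min_le_left _ _
    linarith
  -- pick k large
  obtain ⟨k₀, hk₀⟩ := pow_unbounded_of_one_lt (6/ε) hβ
  set k : ℕ := max k₀ (max n 1) with hkdef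
  have hβk : (0:ℝ) < β ^ k := pow_pos hb0 k
  have h6 : 6/ε < β ^ k :=
    lt_of_lt_of_le hk₀ (pow_le_pow_right₀ (le_of_lt hβ) (le_max_left _ _))
  have hksmall : (β ^ k)⁻¹ < ε/6 := by
    have h6' : 6 < β ^ k * ε := (div_lt_iff₀ hε).mp h6
    have hδ : β ^ k * (β ^ k)⁻¹ = 1 := mul_inv_cancel₀ (ne_of_gt hβk)
    nlinarith [mul_pos (sub_pos.mpr h6') (inv_pos.mpr hβk)]
  have hnk : n ≤ k := le_trans (le_max_left n 1) (le_max_right k₀ _)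
  have h1k : 1 ≤ k := le_trans (le_max_right n 1) (le_max_right k₀ _)
  -- the admissible word of the first k digits of x
  set w : List ℤ := (List.range k).map (eps β x) with hwdef
  have hwlen : w.length = k := by simp [hwdef]
  have hxw : x ∈ cyl β w := by
    refine ⟨hx, fun j hj => ?_⟩
    rw [hwlen] at hj
    rw [hwdef, getD_map_range hj]
  have hadm : Admissible β w := ⟨x, hxw⟩
  -- raise the tail
  obtain ⟨x₁, i, hx₁mem, hik, hdig, hTi⟩ := reach_one hβ hx k
  have hx₁x : |x₁ - x| ≤ (β ^ k)⁻¹ := dist_le hβ hx₁mem hx hdig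
  have hiter : (Tbeta β)^[k] x₁ = (Tbeta β)^[k - i] 1 := by
    have h' : (Tbeta β)^[k] x₁ = (Tbeta β)^[k-i] ((Tbeta β)^[i] x₁) := by
      rw [← Function.iterate_add_apply]; congr 1; omega
    rw [h', hTi]
  have ht : (β ^ (Gam β k + 1))⁻¹ ≤ (Tbeta β)^[k] x₁ := by
    rcases Nat.eq_zero_or_pos (k - i) with h0 | hpos'
    · rw [hiter, h0]
      simp only [Function.iterate_zero_apply]
      exact inv_le_one_of_one_le₀ (one_le_pow₀ (le_of_lt hβ))
    · have hlb := T_one_lb hβ (k - i)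
      have hts : tseq β (k - i) ≤ Gam β k :=
        Finset.le_sup (Finset.mem_Icc.mpr ⟨hpos', Nat.sub_le k i⟩)
      have hmono : β ^ (tseq β (k-i) + 1) ≤ β ^ (Gam β k + 1) :=
        pow_le_pow_right₀ (le_of_lt hβ) (by omega)
      have := inv_anti₀ (pow_pos hb0 _) hmono
      rw [hiter]
      exact le_trans this (le_of_lt hlb)
  -- the Ω word
  set bigJ : List ℤ := ((List.range k).map (fun j =>
      estarWord β (m (j + 1)) ++ List.replicate (tseq β (m (j + 1)) + 1) 0)).flatten with hJdef
  obtain ⟨y, hy⟩ := omega_adm hβ ((List.range k).map (fun j => m (j + 1)))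
  have hyJ : y ∈ cyl β bigJ := by
    have : (((List.range k).map (fun j => m (j + 1))).map (fun m' =>
        estarWord β m' ++ List.replicate (tseq β m' + 1) 0)).flatten = bigJ := by
      rw [hJdef, List.map_map]
      rfl
    rw [← this]
    exact hy
  have hy1 : y ∈ Ioc (0:ℝ) 1 := hyJ.1
  -- concatenate
  obtain ⟨x', hx'mem, hd1, hd2, hd3, hdist⟩ :=
    concat hβ hx₁mem hy1 k (Gam β k + 1) ht
  set v : List ℤ := w ++ List.replicate (Gam β k + 1) 0 ++ bigJ with hvdef
  have hx'v : x' ∈ cyl β v := by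
    apply mem_cyl_concat hβ hx'mem
    · intro j hj
      rw [hwlen] at hj
      rw [hwdef, getD_map_range hj]
      rw [hd1 j hj, hdig j hj]
    · intro j hj
      rw [hwlen]
      exact hd2 j hj
    · intro j hj
      rw [hwlen]
      exact (hd3 j).trans (hyJ.2 j hj)
  -- interior point
  obtain ⟨p, hp, hpd⟩ := interior_point hβ hx'mem v.length
  have hpv : p ∈ intIn01 (cyl β v) := by
    apply intIn01_mono _ hp
    intro u hu
    exact ⟨hu.1, fun j hj => (hu.2 j hj).trans (hx'v.2 j hj)⟩
  have hklen : k ≤ v.length := by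
    simp only [hvdef, List.length_append, hwlen]
    omega
  have hplen : (β ^ v.length)⁻¹ ≤ (β ^ k)⁻¹ :=
    inv_anti₀ hβk (pow_le_pow_right₀ (le_of_lt hβ) hklen)
  refine ⟨p, ?_, ?_⟩
  · apply mem_iUnion.mpr ⟨k, _⟩
    apply mem_iUnion.mpr ⟨⟨hnk, h1k⟩, _⟩
    apply mem_iUnion.mpr ⟨w, _⟩
    apply mem_iUnion.mpr ⟨⟨hwlen, hadm⟩, _⟩
    exact hpv
  · have : |p - z| ≤ |p - x'| + |x' - x₁| + |x₁ - x| + |x - z| := by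
      have t1 : p - z = (p - x') + ((x' - x₁) + ((x₁ - x) + (x - z))) := by ring
      rw [t1]
      refine le_trans (abs_add_le _ _) ?_
      have := abs_add_le (x' - x₁) ((x₁ - x) + (x - z))
      have h2 := abs_add_le (x₁ - x) (x - z)
      linarith
    have hb : |p - z| ≤ (β^k)⁻¹ + (β^k)⁻¹ + (β^k)⁻¹ + ε/2 := by
      linarith [le_trans hpd hplen, hdist, hx₁x, hxz]
    linarith [hksmall]

lemma isOpen_pre_intIn01 (S : Set ℝ) :
    IsOpen ((Subtype.val : (Icc (0:ℝ) 1) → ℝ) ⁻¹' (intIn01 S)) := by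
  have h : (Subtype.val : (Icc (0:ℝ) 1) → ℝ) ⁻¹' (intIn01 S)
      = ((Subtype.val : (Icc (0:ℝ) 1) → ℝ) ⁻¹' (closure (Icc 0 1 \ S)))ᶜ := by
    ext u
    simp only [intIn01, mem_preimage, mem_diff, mem_compl_iff]
    exact and_iff_right u.2
  rw [h]
  exact (isClosed_closure.preimage continuous_subtype_val).isOpen_compl

end BetaAux

theorem U_dense' (β : ℝ) (hβ : 1 < β) (m : ℕ → ℕ) :
    closure (⋂ n : ℕ, ⋃ k : ℕ, ⋃ (_ : n ≤ k ∧ 1 ≤ k), ⋃ w : List ℤ,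
        ⋃ (_ : w.length = k ∧ Admissible β w),
          intIn01 (cyl β (w ++ List.replicate (Gam β k + 1) 0 ++
            ((List.range k).map (fun j =>
              estarWord β (m (j + 1)) ++ List.replicate (tseq β (m (j + 1)) + 1) 0)).flatten)))
      = Icc (0:ℝ) 1 := by
  classical
  set A : ℕ → Set ℝ := fun n => ⋃ k : ℕ, ⋃ (_ : n ≤ k ∧ 1 ≤ k), ⋃ w : List ℤ,
        ⋃ (_ : w.length = k ∧ Admissible β w),
          intIn01 (cyl β (w ++ List.replicate (Gam β k + 1) 0 ++
            ((List.range k).map (fun j =>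
              estarWord β (m (j + 1)) ++ List.replicate (tseq β (m (j + 1)) + 1) 0)).flatten))
    with hA
  show closure (⋂ n, A n) = Icc (0:ℝ) 1
  have hAsub : ∀ n, A n ⊆ Icc (0:ℝ) 1 := by
    intro n
    rw [hA]
    refine iUnion_subset fun k => iUnion_subset fun _ => iUnion_subset fun w' =>
      iUnion_subset fun _ => BetaAux.intIn01_subset_Icc _
  haveI : CompleteSpace (Icc (0:ℝ) 1) := isClosed_Icc.completeSpace_coe
  set Sn : ℕ → Set (Icc (0:ℝ) 1) := fun n => Subtype.val ⁻¹' A n with hSn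
  have hopen : ∀ n, IsOpen (Sn n) := by
    intro n
    rw [hSn, hA]
    simp only [preimage_iUnion]
    exact isOpen_iUnion fun k => isOpen_iUnion fun _ => isOpen_iUnion fun w' =>
      isOpen_iUnion fun _ => BetaAux.isOpen_pre_intIn01 _
  have hdense : ∀ n, Dense (Sn n) := by
    intro n
    rw [Metric.dense_iff]
    intro u r hr
    obtain ⟨p, hpA, hpd⟩ := BetaAux.key_density hβ m n u.2 hr
    refine ⟨⟨p, hAsub n hpA⟩, ?_, hpA⟩
    rw [Metric.mem_ball, Subtype.dist_eq, Real.dist_eq]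
    exact hpd
  have hD : Dense (⋂ n, Sn n) := dense_iInter_of_isOpen hopen hdense
  apply Subset.antisymm
  · exact closure_minimal ((iInter_subset A 0).trans (hAsub 0)) isClosed_Icc
  · intro z hz
    have hx' : (⟨z, hz⟩ : Icc (0:ℝ) 1) ∈ closure (⋂ n, Sn n) := hD _
    rw [closure_subtype] at hx'
    refine closure_mono ?_ hx'
    rintro q ⟨u, hu, rfl⟩
    exact mem_iInter.mpr fun n => (mem_iInter.mp hu n : u ∈ Sn n)

/-- Suppose `λ(β) > 0` and `(m_k)_{k ≥ 1}` is an increasing sequence of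
positive integers with `lim_k t_{m_k}/m_k = λ(β)` and
`lim_k (k + Γ_k + 1 + Σ_{j=1}^{k−1}(m_j + t_{m_j} + 1))/m_k = 0`. Setting
`ω_k = (ε*_1,…,ε*_{m_k}, 0^{t_{m_k}+1})` and
`U = ∩_{n≥1} ∪_{k≥n} ∪_{(ε_1,…,ε_k) admissible} int(I(ε_1,…,ε_k, 0^{Γ_k+1}, ω_1,…,ω_k))`
(interiors in `[0,1]`), the set `U` is dense in `[0,1]`. -/
theorem U_dense (β : ℝ) (hβ : 1 < β) (hlam : 0 < lam β)
    (m : ℕ → ℕ) (hmono : StrictMono m) (hpos : ∀ k, 0 < m k)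
    (h1 : Tendsto (fun k => (tseq β (m k) : ℝ) / (m k : ℝ)) atTop (nhds (lam β)))
    (h2 : Tendsto (fun k : ℕ =>
        ((k : ℝ) + (Gam β k : ℝ) + 1 +
            ∑ j ∈ Finset.Icc 1 (k - 1), ((m j : ℝ) + (tseq β (m j) : ℝ) + 1)) / (m k : ℝ))
      atTop (nhds 0)) :
    closure (⋂ n : ℕ, ⋃ k : ℕ, ⋃ (_ : n ≤ k ∧ 1 ≤ k), ⋃ w : List ℤ,
        ⋃ (_ : w.length = k ∧ Admissible β w),
          intIn01 (cyl β (w ++ List.replicate (Gam β k + 1) 0 ++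
            ((List.range k).map (fun j =>
              estarWord β (m (j + 1)) ++ List.replicate (tseq β (m (j + 1)) + 1) 0)).flatten)))
      = Icc (0:ℝ) 1 := by
  exact U_dense' β hβ m
end
end
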